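/- Define A = diag(c_{11},…,c_{dd}), A_0 = (c_{ij}·1_{pa(j)}(i))_{d×d}, and A_1 = (c_{ii} c_{ij}·1_{pa(j)}(i))_{d×d}. Then the max-linear coefficient matrix B satisfies B = A if d = 1, and B = A ∨ ⋁_{k=0}^{d−2} (A_1 ⊙ A_0^{⊙k}) if d ≥ 2, where ∨ denotes the entrywise maximum of matrices. -/

import Mathlib

open scoped NNReal ENNReal Classical

namespace MaxLinearDAG

variable {d : ℕ}

/-- `p` is a directed path (with at least one edge) from `j` to `i` in the edge relation `E`. -/
def PathFrom (E : Fin d → Fin d → Prop) (j i : Fin d) (p : List (Fin d)) : Prop :=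
  2 ≤ p.length ∧ p.head? = some j ∧ p.getLast? = some i ∧ List.Chain' E p

/-- The directed graph given by `E` is acyclic: no directed path from a node to itself. -/
def Acyclic (E : Fin d → Fin d → Prop) : Prop :=
  ∀ i, ¬ ∃ p, PathFrom E i i p

/-- `j` is an ancestor of `i`: there is a path from `j` to `i`. -/
def anc (E : Fin d → Fin d → Prop) (j i : Fin d) : Prop :=
  ∃ p, PathFrom E j i p

/-- The weight of a path `p` starting at `j`: `c j j` times the product of the
edge weights along `p`. -/
noncomputable def pathWeight (c : Fin d → Fin d → ℝ≥0) (j : Fin d) (p : List (Fin d)) : ℝ≥0 :=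
  c j j * ((p.zip p.tail).map fun q => c q.1 q.2).prod

/-- `b` is the max-linear coefficient matrix of the recursive ML model on `(E, c)`:
for `j ∈ an(i)`, `b j i` is the (attained) maximum of the path weights over all paths
from `j` to `i`; `b i i = c i i`; and `b j i = 0` for `j ∉ An(i)`. -/
def IsMLMatrix (E : Fin d → Fin d → Prop) (c b : Fin d → Fin d → ℝ≥0) : Prop :=
  (∀ i, b i i = c i i) ∧
  (∀ j i, j ≠ i → ¬ anc E j i → b j i = 0) ∧
  (∀ j i p, PathFrom E j i p → pathWeight c j p ≤ b j i) ∧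
  (∀ j i, anc E j i → ∃ p, PathFrom E j i p ∧ pathWeight c j p = b j i)

/-- `x` is the vector of recursive max-linear values on `(E, c)` for noise `z`:
`x i = max (max_{k ∈ pa(i)} c k i * x k) (c i i * z i)`, empty max being `0`. -/
def IsRecML (E : Fin d → Fin d → Prop) (c : Fin d → Fin d → ℝ≥0) (z x : Fin d → ℝ≥0) : Prop :=
  ∀ i, x i = (Finset.univ.sup fun k => if E k i then c k i * x k else 0) ⊔ c i i * z i

/-- Max-times matrix product `F ⊙ G`. -/
noncomputable def mprod (F G : Fin d → Fin d → ℝ≥0) : Fin d → Fin d → ℝ≥0 :=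
  fun i j => Finset.univ.sup fun k => F i k * G k j

/-- Max-times matrix power, `mpow A 0` being the identity matrix. -/
noncomputable def mpow (A : Fin d → Fin d → ℝ≥0) : ℕ → Fin d → Fin d → ℝ≥0
  | 0 => fun i j => if i = j then 1 else 0
  | n + 1 => mprod (mpow A n) A

/-- `p` is a max-weighted path from `j` to `i`. -/
def MaxWeighted (E : Fin d → Fin d → Prop) (c b : Fin d → Fin d → ℝ≥0)
    (j i : Fin d) (p : List (Fin d)) : Prop :=
  PathFrom E j i p ∧ pathWeight c j p = b j i

/-- The lowest max-weighted ancestors of `i` in `U`: nodes `j ∈ An(i) ∩ U` such that no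
max-weighted path from `j` to `i` passes through a node of `U \ {j}`. -/
def AnLow (E : Fin d → Fin d → Prop) (c b : Fin d → Fin d → ℝ≥0)
    (U : Set (Fin d)) (i : Fin d) : Set (Fin d) :=
  {j | (anc E j i ∨ j = i) ∧ j ∈ U ∧
    ∀ p, MaxWeighted E c b j i p → ¬ ∃ u ∈ U \ {j}, u ∈ p}

/-- The highest max-weighted descendants of `i` in `U`: nodes `l ∈ De(i) ∩ U` such that no
max-weighted path from `i` to `l` passes through a node of `U \ {l}`. -/
def DeHigh (E : Fin d → Fin d → Prop) (c b : Fin d → Fin d → ℝ≥0)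
    (U : Set (Fin d)) (i : Fin d) : Set (Fin d) :=
  {l | (anc E i l ∨ l = i) ∧ l ∈ U ∧
    ∀ p, MaxWeighted E c b i l p → ¬ ∃ u ∈ U \ {l}, u ∈ p}

/-! ### Auxiliary lemmas -/

/-- The edge-weight product along a list of nodes. -/
noncomputable def eprod (c : Fin d → Fin d → ℝ≥0) (p : List (Fin d)) : ℝ≥0 :=
  ((p.zip p.tail).map fun q => c q.1 q.2).prod

lemma pathWeight_eq (c : Fin d → Fin d → ℝ≥0) (j : Fin d) (p : List (Fin d)) :
    pathWeight c j p = c j j * eprod c p := rfl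

lemma eprod_singleton (c : Fin d → Fin d → ℝ≥0) (x : Fin d) : eprod c [x] = 1 := by
  simp [eprod]

lemma eprod_cons_cons (c : Fin d → Fin d → ℝ≥0) (x y : Fin d) (l : List (Fin d)) :
    eprod c (x :: y :: l) = c x y * eprod c (y :: l) := by
  simp [eprod]

lemma mul_finsetSup (a : ℝ≥0) (s : Finset (Fin d)) (f : Fin d → ℝ≥0) :
    a * s.sup f = s.sup fun k => a * f k := by
  rcases s.eq_empty_or_nonempty with h | h
  · simp [h]
  · refine le_antisymm ?_ (Finset.sup_le fun k hk => mul_le_mul_right (Finset.le_sup hk) a)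
    obtain ⟨k, hk, hke⟩ := Finset.exists_mem_eq_sup s h f
    rw [hke]
    exact Finset.le_sup (f := fun k => a * f k) hk

lemma finsetSup_mul (a : ℝ≥0) (s : Finset (Fin d)) (f : Fin d → ℝ≥0) :
    s.sup f * a = s.sup fun k => f k * a := by
  rcases s.eq_empty_or_nonempty with h | h
  · simp [h]
  · refine le_antisymm ?_ (Finset.sup_le fun k hk => mul_le_mul_left (Finset.le_sup hk) a)
    obtain ⟨k, hk, hke⟩ := Finset.exists_mem_eq_sup s h f
    rw [hke]
    exact Finset.le_sup (f := fun k => f k * a) hk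

lemma mprod_assoc (X Y Z : Fin d → Fin d → ℝ≥0) :
    mprod (mprod X Y) Z = mprod X (mprod Y Z) := by
  funext i j
  show (Finset.univ.sup fun k => (Finset.univ.sup fun m => X i m * Y m k) * Z k j)
      = Finset.univ.sup fun m => X i m * Finset.univ.sup fun k => Y m k * Z k j
  have h1 : ∀ k, (Finset.univ.sup fun m => X i m * Y m k) * Z k j
      = Finset.univ.sup fun m => X i m * Y m k * Z k j := fun k =>
    finsetSup_mul (Z k j) Finset.univ _
  have h2 : ∀ m, (X i m * Finset.univ.sup fun k => Y m k * Z k j)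
      = Finset.univ.sup fun k => X i m * (Y m k * Z k j) := fun m =>
    mul_finsetSup (X i m) Finset.univ _
  simp only [h1, h2]
  rw [Finset.sup_comm]
  simp [mul_assoc]

lemma mprod_id_left (M : Fin d → Fin d → ℝ≥0) :
    mprod (fun i j => if i = j then 1 else 0) M = M := by
  funext i j
  refine le_antisymm (Finset.sup_le fun k _ => ?_) ?_
  · by_cases h : i = k
    · subst h; simp
    · simp [h]
  · have h := Finset.le_sup (f := fun k => (if i = k then (1:ℝ≥0) else 0) * M k j)
      (Finset.mem_univ i)
    beta_reduce at h
    rw [if_pos rfl, one_mul] at h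
    exact h

lemma mprod_id_right (M : Fin d → Fin d → ℝ≥0) :
    mprod M (fun i j => if i = j then 1 else 0) = M := by
  funext i j
  refine le_antisymm (Finset.sup_le fun k _ => ?_) ?_
  · by_cases h : k = j
    · subst h; simp
    · simp [h]
  · have h := Finset.le_sup (f := fun k => M i k * if k = j then (1:ℝ≥0) else 0)
      (Finset.mem_univ j)
    beta_reduce at h
    rw [if_pos rfl, mul_one] at h
    exact h

lemma mpow_succ' (M : Fin d → Fin d → ℝ≥0) (n : ℕ) :
    mpow M (n + 1) = mprod M (mpow M n) := by
  induction n with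
  | zero =>
    show mprod (mpow M 0) M = mprod M (mpow M 0)
    show mprod (fun i j => if i = j then 1 else 0) M
        = mprod M (fun i j => if i = j then 1 else 0)
    rw [mprod_id_left, mprod_id_right]
  | succ n ih =>
    show mprod (mpow M (n + 1)) M = mprod M (mpow M (n + 1))
    rw [ih, mprod_assoc, show mprod (mpow M n) M = mpow M (n + 1) from rfl, ih]

/-- From a chain starting at `y`, any later element `x` is reachable by a path. -/
lemma chain'_pathFrom (E : Fin d → Fin d → Prop) :
    ∀ (l : List (Fin d)) (y x : Fin d), List.Chain' E (y :: l) → x ∈ l →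
      ∃ p, PathFrom E y x p := by
  intro l
  induction l with
  | nil => intro y x _ hx; simp at hx
  | cons z l' ih =>
    intro y x hc hx
    simp only [List.Chain', List.isChain_cons_cons] at hc
    rcases List.mem_cons.mp hx with h | h
    · refine ⟨[y, x], by simp, rfl, by simp, ?_⟩
      exact List.isChain_pair.mpr (by rw [h]; exact hc.1)
    · obtain ⟨q, hq⟩ := ih z x hc.2 h
      obtain ⟨hlen, hh, hl, hcq⟩ := hq
      obtain ⟨w, q', rfl⟩ : ∃ w q', q = w :: q' := by
        cases q with
        | nil => simp at hlen
        | cons a t => exact ⟨a, t, rfl⟩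
      have hw : w = z := by simpa using hh
      subst hw
      refine ⟨y :: w :: q', ?_, rfl, ?_, ?_⟩
      · simp
      · rw [List.getLast?_cons_cons]; exact hl
      · simp only [List.Chain', List.isChain_cons_cons]
        exact ⟨hc.1, hcq⟩

lemma chain'_nodup (E : Fin d → Fin d → Prop) (hE : Acyclic E) :
    ∀ p : List (Fin d), List.Chain' E p → p.Nodup := by
  intro p
  induction p with
  | nil => intro _; exact List.nodup_nil
  | cons x l ih =>
    intro hc
    refine List.nodup_cons.mpr ⟨fun hx => ?_, ih hc.tail⟩
    obtain ⟨q, hq⟩ := chain'_pathFrom E l x x hc hx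
    exact hE x ⟨q, hq⟩

lemma eprod_le_mpow (E : Fin d → Fin d → Prop) (c : Fin d → Fin d → ℝ≥0) :
    ∀ (p : List (Fin d)) (x j : Fin d), List.Chain' E p → p.head? = some x →
      p.getLast? = some j →
      eprod c p ≤ mpow (fun i j => if E i j then c i j else 0) (p.length - 1) x j := by
  intro p
  induction p with
  | nil => intro x j _ hh _; simp at hh
  | cons a l ih =>
    intro x j hc hh hl
    have hxa : x = a := by simpa using hh.symm
    subst hxa
    cases l with
    | nil =>
      have : j = x := by simpa using hl.symm
      subst this
      simp [eprod_singleton, mpow]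
    | cons b l' =>
      simp only [List.Chain', List.isChain_cons_cons] at hc
      have hlast : (b :: l').getLast? = some j := by
        rw [← hl]; rfl
      have hrec := ih b j hc.2 rfl hlast
      rw [eprod_cons_cons]
      have hlen : (x :: b :: l').length - 1 = ((b :: l').length - 1) + 1 := by
        simp
      rw [hlen, mpow_succ']
      show c x b * eprod c (b :: l') ≤
        Finset.univ.sup fun m => (if E x m then c x m else 0) *
          mpow (fun i j => if E i j then c i j else 0) ((b :: l').length - 1) m j
      have hle := Finset.le_sup (f := fun m => (if E x m then c x m else 0) *
          mpow (fun i j => if E i j then c i j else 0) ((b :: l').length - 1) m j)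
        (Finset.mem_univ b)
      refine le_trans ?_ hle
      beta_reduce
      rw [if_pos hc.1]
      exact mul_le_mul_right hrec _

lemma mpow_extract (E : Fin d → Fin d → Prop) (c : Fin d → Fin d → ℝ≥0) :
    ∀ (n : ℕ) (x j : Fin d),
      mpow (fun i j => if E i j then c i j else 0) n x j ≠ 0 →
      ∃ p : List (Fin d), p.length = n + 1 ∧ p.head? = some x ∧ p.getLast? = some j ∧
        List.Chain' E p ∧ eprod c p = mpow (fun i j => if E i j then c i j else 0) n x j := by
  intro n
  induction n with
  | zero =>
    intro x j h0
    have hxj : x = j := by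
      by_contra hne
      exact h0 (by simp [mpow, hne])
    subst hxj
    exact ⟨[x], rfl, rfl, rfl, List.isChain_singleton x, by simp [eprod_singleton, mpow]⟩
  | succ n ih =>
    intro x j h0
    rw [mpow_succ'] at h0 ⊢
    obtain ⟨m, _, hm⟩ := Finset.exists_mem_eq_sup Finset.univ ⟨x, Finset.mem_univ x⟩
      (fun k => (if E x k then c x k else 0) *
        mpow (fun i j => if E i j then c i j else 0) n k j)
    rw [show mprod (fun i j => if E i j then c i j else 0)
        (mpow (fun i j => if E i j then c i j else 0) n) x j
        = Finset.univ.sup (fun k => (if E x k then c x k else 0) *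
          mpow (fun i j => if E i j then c i j else 0) n k j) from rfl, hm] at h0 ⊢
    have hExm : E x m := by
      by_contra hne
      exact h0 (by simp [hne])
    have hmp : mpow (fun i j => if E i j then c i j else 0) n m j ≠ 0 := by
      intro hz
      exact h0 (by simp [hz])
    obtain ⟨q, hqlen, hqh, hql, hqc, hqe⟩ := ih m j hmp
    obtain ⟨m', q', rfl⟩ : ∃ m' q', q = m' :: q' := by
      cases q with
      | nil => simp at hqlen
      | cons a t => exact ⟨a, t, rfl⟩
    have hm' : m' = m := by simpa using hqh
    subst hm'
    refine ⟨x :: m' :: q', by simpa using hqlen, rfl,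
      by rw [List.getLast?_cons_cons]; exact hql, ?_, ?_⟩
    · simp only [List.Chain', List.isChain_cons_cons]
      exact ⟨hExm, hqc⟩
    · rw [eprod_cons_cons, hqe, if_pos hExm]

/-- With `A = diag(c 1 1, …, c d d)`, `A0 = (c i j • 1_{pa(j)}(i))` and
`A1 = (c i i * c i j • 1_{pa(j)}(i))`, the ML coefficient matrix `B` satisfies `B = A` if
`d = 1`, and `B = A ∨ ⋁_{k=0}^{d-2} (A1 ⊙ A0^{⊙k})` if `d ≥ 2`. -/
theorem stmt1 {d : ℕ} (hd : 1 ≤ d) (E : Fin d → Fin d → Prop) (hE : Acyclic E)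
    (c : Fin d → Fin d → ℝ≥0) (hcd : ∀ i, 0 < c i i) (hce : ∀ k i, E k i → 0 < c k i)
    (b : Fin d → Fin d → ℝ≥0) (hb : IsMLMatrix E c b) :
    let A : Fin d → Fin d → ℝ≥0 := fun i j => if i = j then c i i else 0
    let A0 : Fin d → Fin d → ℝ≥0 := fun i j => if E i j then c i j else 0
    let A1 : Fin d → Fin d → ℝ≥0 := fun i j => if E i j then c i i * c i j else 0
    (d = 1 → ∀ i j, b i j = A i j) ∧
    (2 ≤ d → ∀ i j, b i j =
      A i j ⊔ (Finset.range (d - 1)).sup fun k => mprod A1 (mpow A0 k) i j) := by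
  obtain ⟨hbd, hbz, hble, hbex⟩ := hb
  intro A A0 A1
  have hA1 : ∀ i m, A1 i m = c i i * A0 i m := by
    intro i m
    show (if E i m then c i i * c i m else 0) = c i i * if E i m then c i m else 0
    split <;> simp
  have hterm : ∀ (k : ℕ) (i j : Fin d),
      mprod A1 (mpow A0 k) i j = c i i * mpow A0 (k + 1) i j := by
    intro k i j
    rw [mpow_succ']
    show (Finset.univ.sup fun m => A1 i m * mpow A0 k m j)
        = c i i * Finset.univ.sup fun m => A0 i m * mpow A0 k m j
    rw [mul_finsetSup]
    congr 1
    funext m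
    rw [hA1, mul_assoc]
  constructor
  · intro h1 i j
    have hij : i = j := by
      subst h1
      omega
    subst hij
    show b i i = if i = i then c i i else 0
    rw [if_pos rfl]
    exact hbd i
  · intro h2 i j
    refine le_antisymm ?_ (sup_le ?_ (Finset.sup_le fun k _ => ?_))
    · -- b i j ≤ RHS
      by_cases hij : i = j
      · subst hij
        have : b i i = A i i := by
          rw [hbd i]
          show c i i = if i = i then c i i else 0
          rw [if_pos rfl]
        rw [this]
        exact le_sup_left
      · by_cases hanc : anc E i j
        · obtain ⟨p, hp, hw⟩ := hbex i j hanc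
          obtain ⟨hlen, hh, hl, hc'⟩ := hp
          have hnd := chain'_nodup E hE p hc'
          have hlend : p.length ≤ d := by
            have := hnd.length_le_card
            simpa using this
          have hk : p.length - 2 ∈ Finset.range (d - 1) := by
            simp only [Finset.mem_range]
            omega
          refine le_trans ?_ (le_trans (Finset.le_sup hk) le_sup_right)
          rw [hterm]
          have hle2 : eprod c p ≤ mpow A0 (p.length - 2 + 1) i j := by
            have h21 : p.length - 2 + 1 = p.length - 1 := by omega
            rw [h21]
            exact eprod_le_mpow E c p i j hc' hh hl
          calc b i j = c i i * eprod c p := by rw [← hw, pathWeight_eq]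
            _ ≤ c i i * mpow A0 (p.length - 2 + 1) i j := mul_le_mul_right hle2 _
        · rw [hbz i j hij hanc]
          exact zero_le
    · -- A i j ≤ b i j
      by_cases hij : i = j
      · subst hij
        show (if i = i then c i i else 0) ≤ b i i
        rw [if_pos rfl, hbd i]
      · show (if i = j then c i i else 0) ≤ b i j
        rw [if_neg hij]
        exact zero_le
    · -- each sup term ≤ b i j
      rw [hterm]
      by_cases h0 : mpow A0 (k + 1) i j = 0
      · rw [h0, mul_zero]
        exact zero_le
      · obtain ⟨p, hplen, hph, hpl, hpc, hpe⟩ := mpow_extract E c (k + 1) i j h0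
        have hpf : PathFrom E i j p := ⟨by omega, hph, hpl, hpc⟩
        have := hble i j p hpf
        rw [pathWeight_eq, hpe] at this
        exact this
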